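/- Let $N \ge 1$, $\tilde{G} \in \mathbb{R}^{N \times N}$, $\gamma \ge 0$, $\varepsilon > 0$, and let $P \in \mathbb{R}^{N \times N}$ be symmetric positive definite satisfying the algebraic Riccati equation $\tilde{G}^\top P + P \tilde{G} + \gamma^2 P P + (1 + \varepsilon)\mathbf{I}_N = 0$. Then for all $e, d \in \mathbb{R}^N$ with $\|d\| \le \gamma \|e\|$ (Euclidean norm), $\langle e, P(\tilde{G} e + d) \rangle \le -\tfrac{\varepsilon}{2} \|e\|^2$. -/

import Mathlib

open Matrix

/-- If the symmetric positive definite `P` solves the Riccati equation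
`G̃ᵀP + PG̃ + γ²PP + (1+ε)I = 0`, then along any direction `d` with
`‖d‖ ≤ γ‖e‖` the Lyapunov derivative satisfies
`⟨e, P(G̃e + d)⟩ ≤ -(ε/2)‖e‖²`. -/
theorem stmt8 (N : ℕ) (hN : 1 ≤ N) (Gt : Matrix (Fin N) (Fin N) ℝ)
    (γ : ℝ) (hγ : 0 ≤ γ) (ε : ℝ) (hε : 0 < ε)
    (P : Matrix (Fin N) (Fin N) ℝ) (hP : P.PosDef)
    (hric : Gtᵀ * P + P * Gt + γ ^ 2 • (P * P)
        + (1 + ε) • (1 : Matrix (Fin N) (Fin N) ℝ) = 0) :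
    ∀ e d : EuclideanSpace ℝ (Fin N), ‖d‖ ≤ γ * ‖e‖ →
      (inner ℝ e (Matrix.toEuclideanLin P (Matrix.toEuclideanLin Gt e + d)) : ℝ)
        ≤ -(ε / 2) * ‖e‖ ^ 2 := by
  intro e d hd
  set L := (Matrix.toEuclideanLin : Matrix (Fin N) (Fin N) ℝ ≃ₗ[ℝ] _) with hL
  have hPsym : Pᵀ = P := by
    have := hP.isHermitian
    simpa [Matrix.IsHermitian, Matrix.conjTranspose_eq_transpose_of_trivial] using this
  -- multiplicativity
  have hmul : ∀ (A B : Matrix (Fin N) (Fin N) ℝ) (x : EuclideanSpace ℝ (Fin N)),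
      L (A * B) x = L A (L B x) := by
    intro A B x
    simp [hL, Matrix.toEuclideanLin_apply, Matrix.mulVec_mulVec]
  have hadj : ∀ (A : Matrix (Fin N) (Fin N) ℝ) (x y : EuclideanSpace ℝ (Fin N)),
      (inner ℝ (L Aᵀ x) y : ℝ) = inner ℝ x (L A y) := by
    intro A x y
    have h : L Aᵀ = LinearMap.adjoint (L A) := by
      have := Matrix.toEuclideanLin_conjTranspose_eq_adjoint A
      simpa [Matrix.conjTranspose_eq_transpose_of_trivial, hL] using this
    rw [h, LinearMap.adjoint_inner_left]
  have hPsymm : ∀ x y : EuclideanSpace ℝ (Fin N),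
      (inner ℝ (L P x) y : ℝ) = inner ℝ x (L P y) := by
    intro x y; have := hadj P x y; rwa [hPsym] at this
  -- Riccati quadratic form
  have hq : (inner ℝ e (L (Gtᵀ * P + P * Gt + γ ^ 2 • (P * P)
        + (1 + ε) • (1 : Matrix (Fin N) (Fin N) ℝ)) e) : ℝ) = 0 := by
    rw [hric]; simp
  have hexp : (inner ℝ e (L (Gtᵀ * P + P * Gt + γ ^ 2 • (P * P)
        + (1 + ε) • (1 : Matrix (Fin N) (Fin N) ℝ)) e) : ℝ)
      = 2 * inner ℝ e (L P (L Gt e)) + γ ^ 2 * ‖L P e‖ ^ 2 + (1 + ε) * ‖e‖ ^ 2 := by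
    simp only [map_add, _root_.map_smul, LinearMap.add_apply, LinearMap.smul_apply,
      inner_add_right, inner_smul_right]
    have h1 : (inner ℝ e (L (Gtᵀ * P) e) : ℝ) = inner ℝ e (L P (L Gt e)) := by
      rw [hmul, real_inner_comm, hadj Gt, hPsymm]
    have h2 : (inner ℝ e (L (P * Gt) e) : ℝ) = inner ℝ e (L P (L Gt e)) := by rw [hmul]
    have h3 : (inner ℝ e (L (P * P) e) : ℝ) = ‖L P e‖ ^ 2 := by
      rw [hmul, ← hPsymm, real_inner_self_eq_norm_sq]
    have h4 : (inner ℝ e (L (1 : Matrix (Fin N) (Fin N) ℝ) e) : ℝ) = ‖e‖ ^ 2 := by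
      have : L (1 : Matrix (Fin N) (Fin N) ℝ) e = e := by
        simp [hL, Matrix.toEuclideanLin_apply]
      rw [this, real_inner_self_eq_norm_sq]
    rw [h1, h2, h3, h4]; ring
  have hkey : 2 * (inner ℝ e (L P (L Gt e)) : ℝ)
      = -(γ ^ 2 * ‖L P e‖ ^ 2) - (1 + ε) * ‖e‖ ^ 2 := by
    rw [hexp] at hq; linarith
  have hPd : (inner ℝ e (L P d) : ℝ) ≤ ‖L P e‖ * ‖d‖ := by
    rw [← hPsymm]; exact real_inner_le_norm _ _
  have hrw : (inner ℝ e (L P (L Gt e + d)) : ℝ)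
      = inner ℝ e (L P (L Gt e)) + inner ℝ e (L P d) := by
    rw [map_add, inner_add_right]
  rw [hrw]
  have hdn : (0:ℝ) ≤ ‖L P e‖ := norm_nonneg _
  have hen : (0:ℝ) ≤ ‖e‖ := norm_nonneg _
  have hdd : (0:ℝ) ≤ ‖d‖ := norm_nonneg _
  nlinarith [sq_nonneg (γ * ‖L P e‖ - ‖e‖), mul_le_mul_of_nonneg_left hd hdn]
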